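/- arXiv:1912.03505 — 6 statements merged into one kernel-verified Lean document; each statement's English description precedes it below -/
import Mathlib

section
/- First Main Theorem: Let (X,e) be an L-continuous lattice, equipped with its L-Scott topology σ_L(X), and define r : Φ_L(X) → X by r(u) = ⊔(u^l). Then r ∘ Φ_L r = r ∘ μ_X and r ∘ η_X = id_X; that is, (X,r) is an Eilenberg–Moore algebra of the open filter monad (Φ_L, η, μ). -/
variable {L : Type*} {X : Type*} {Y : Type*}

/-- `sub(A,B) = ⨅ x, A x ⇨ B x` for `L`-subsets `A B : X → L`. -/
def subL [Order.Frame L] (A B : X → L) : L := ⨅ x, A x ⇨ B x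

/-- An `L`-valued topology on `X`: a family of `L`-subsets closed under binary
pointwise infima, arbitrary pointwise suprema, containing all constants. -/
structure IsLTopology [Order.Frame L] (𝒪 : Set (X → L)) : Prop where
  inf_mem : ∀ A B : X → L, A ∈ 𝒪 → B ∈ 𝒪 → A ⊓ B ∈ 𝒪
  sSup_mem : ∀ S : Set (X → L), S ⊆ 𝒪 → sSup S ∈ 𝒪
  const_mem : ∀ a : L, (fun _ => a : X → L) ∈ 𝒪

/-- An open filter of `(X, 𝒪)`: a map `u : 𝒪 → L` with `u (A ⊓ B) = u A ⊓ u B`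
and `u (a_X) ≥ a`. -/
structure LFilter [Order.Frame L] (𝒪 : Set (X → L)) where
  toFun : ↥𝒪 → L
  map_inf : ∀ (A B : ↥𝒪) (h : (A : X → L) ⊓ (B : X → L) ∈ 𝒪),
    toFun ⟨(A : X → L) ⊓ (B : X → L), h⟩ = toFun A ⊓ toFun B
  const_le : ∀ (a : L) (h : (fun _ => a : X → L) ∈ 𝒪), a ≤ toFun ⟨fun _ => a, h⟩

/-- `φ(A)(u) = u(A)`. -/
def phiF [Order.Frame L] (𝒪 : Set (X → L)) (A : ↥𝒪) : LFilter 𝒪 → L := fun u => u.toFun A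

/-- The `L`-valued topology on `Φ_L(X)` generated by the base `{φ(A) | A ∈ 𝒪}`:
its members are exactly the suprema `⨆_j φ(A_j) ⊓ (a_j)_const`. -/
def filtOpens [Order.Frame L] (𝒪 : Set (X → L)) : Set (LFilter 𝒪 → L) :=
  { W | ∃ S : Set (↥𝒪 × L), W = fun u => ⨆ p ∈ S, u.toFun p.1 ⊓ p.2 }

/-- The pointed filter `[x](A) = A(x)`. -/
def ptFilter [Order.Frame L] (𝒪 : Set (X → L)) (x : X) : LFilter 𝒪 where
  toFun A := (A : X → L) x
  map_inf _ _ _ := rfl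
  const_le _ _ := le_rfl

/-- The filter `[S](A) = sub(S, A)` for an `L`-subset `S`. -/
def prFilter [Order.Frame L] (𝒪 : Set (X → L)) (S : X → L) : LFilter 𝒪 where
  toFun A := subL S (A : X → L)
  map_inf A B h := by
    simp only [subL, Pi.inf_apply, himp_inf_distrib]
    exact iInf_inf_eq
  const_le a h := le_iInf fun x => le_himp_iff.2 inf_le_left

/-- `Φ_L f` for a continuous map `f`. -/
def filtMap [Order.Frame L] (𝒪X : Set (X → L)) (𝒪Y : Set (Y → L)) (f : X → Y)
    (hf : ∀ B : ↥𝒪Y, (B : Y → L) ∘ f ∈ 𝒪X) (u : LFilter 𝒪X) : LFilter 𝒪Y where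
  toFun B := u.toFun ⟨(B : Y → L) ∘ f, hf B⟩
  map_inf A B h := u.map_inf ⟨(A : Y → L) ∘ f, hf A⟩ ⟨(B : Y → L) ∘ f, hf B⟩
    (hf ⟨(A : Y → L) ⊓ (B : Y → L), h⟩)
  const_le a h := u.const_le a (hf ⟨fun _ => a, h⟩)

lemma phi_mem [Order.Frame L] (𝒪 : Set (X → L)) (A : ↥𝒪) : phiF 𝒪 A ∈ filtOpens 𝒪 := by
  refine ⟨{(A, ⊤)}, ?_⟩
  funext u
  simp [phiF]

lemma LFilter.mono [Order.Frame L] {𝒪 : Set (X → L)} (u : LFilter 𝒪) (A B : ↥𝒪)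
    (hAB : (A : X → L) ≤ (B : X → L)) : u.toFun A ≤ u.toFun B := by
  have h : (A : X → L) ⊓ (B : X → L) ∈ 𝒪 := by
    rw [inf_eq_left.2 hAB]; exact A.2
  have h2 := u.map_inf A B h
  have h3 : (⟨(A : X → L) ⊓ (B : X → L), h⟩ : ↥𝒪) = A := Subtype.ext (inf_eq_left.2 hAB)
  rw [h3] at h2
  rw [h2]
  exact inf_le_right

lemma phi_inf [Order.Frame L] (𝒪 : Set (X → L)) (A B : ↥𝒪)
    (h : (A : X → L) ⊓ (B : X → L) ∈ 𝒪) :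
    phiF 𝒪 ⟨(A : X → L) ⊓ (B : X → L), h⟩ = phiF 𝒪 A ⊓ phiF 𝒪 B := by
  funext u
  exact u.map_inf A B h

lemma const_mem_filtOpens [Order.Frame L] (𝒪 : Set (X → L)) (a : L)
    (h : (fun _ => a : X → L) ∈ 𝒪) :
    (fun _ => a : LFilter 𝒪 → L) ∈ filtOpens 𝒪 := by
  refine ⟨{(⟨fun _ => a, h⟩, a)}, ?_⟩
  funext u
  simp only [Set.mem_singleton_iff, iSup_iSup_eq_left]
  exact (inf_eq_right.2 (u.const_le a h)).symm

/-- `μ_X(α)(A) = α(φ(A))`. -/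
def muF [Order.Frame L] (𝒪 : Set (X → L)) (α : LFilter (filtOpens 𝒪)) : LFilter 𝒪 where
  toFun A := α.toFun ⟨phiF 𝒪 A, phi_mem 𝒪 A⟩
  map_inf A B h := by
    have h' : phiF 𝒪 A ⊓ phiF 𝒪 B ∈ filtOpens 𝒪 := phi_inf 𝒪 A B h ▸ phi_mem 𝒪 ⟨_, h⟩
    have h2 := α.map_inf ⟨phiF 𝒪 A, phi_mem 𝒪 A⟩ ⟨phiF 𝒪 B, phi_mem 𝒪 B⟩ h'
    have h3 : (⟨phiF 𝒪 ⟨(A : X → L) ⊓ (B : X → L), h⟩, phi_mem 𝒪 ⟨_, h⟩⟩ :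
        ↥(filtOpens 𝒪)) = ⟨phiF 𝒪 A ⊓ phiF 𝒪 B, h'⟩ := Subtype.ext (phi_inf 𝒪 A B h)
    show α.toFun ⟨phiF 𝒪 ⟨(A : X → L) ⊓ (B : X → L), h⟩, phi_mem 𝒪 ⟨_, h⟩⟩ =
      α.toFun ⟨phiF 𝒪 A, phi_mem 𝒪 A⟩ ⊓ α.toFun ⟨phiF 𝒪 B, phi_mem 𝒪 B⟩
    rw [h3]
    exact h2
  const_le a h := by
    have h1 : (fun _ => a : LFilter 𝒪 → L) ∈ filtOpens 𝒪 := const_mem_filtOpens 𝒪 a h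
    have h2 : (fun _ => a : LFilter 𝒪 → L) ≤ phiF 𝒪 ⟨fun _ => a, h⟩ :=
      fun u => u.const_le a h
    exact le_trans (α.const_le a h1) (α.mono ⟨_, h1⟩ ⟨_, phi_mem 𝒪 ⟨_, h⟩⟩ h2)

lemma filtMap_continuous [Order.Frame L] (𝒪X : Set (X → L)) (𝒪Y : Set (Y → L)) (f : X → Y)
    (hf : ∀ B : ↥𝒪Y, (B : Y → L) ∘ f ∈ 𝒪X) :
    ∀ W ∈ filtOpens 𝒪Y, (W ∘ filtMap 𝒪X 𝒪Y f hf) ∈ filtOpens 𝒪X := by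
  rintro W ⟨S, rfl⟩
  refine ⟨(fun p : ↥𝒪Y × L => ((⟨(p.1 : Y → L) ∘ f, hf p.1⟩ : ↥𝒪X), p.2)) '' S, ?_⟩
  funext u
  rw [iSup_image]
  rfl

lemma muF_continuous [Order.Frame L] (𝒪 : Set (X → L)) :
    ∀ W ∈ filtOpens 𝒪, (W ∘ muF 𝒪) ∈ filtOpens (filtOpens 𝒪) := by
  rintro W ⟨S, rfl⟩
  refine ⟨(fun p : ↥𝒪 × L =>
    ((⟨phiF 𝒪 p.1, phi_mem 𝒪 p.1⟩ : ↥(filtOpens 𝒪)), p.2)) '' S, ?_⟩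
  funext α
  rw [iSup_image]
  rfl

lemma ptFilter_continuous [Order.Frame L] (𝒪 : Set (X → L)) (h𝒪 : IsLTopology 𝒪) :
    ∀ W ∈ filtOpens 𝒪, (W ∘ ptFilter 𝒪) ∈ 𝒪 := by
  rintro W ⟨S, rfl⟩
  have key : ((fun u : LFilter 𝒪 => ⨆ p ∈ S, u.toFun p.1 ⊓ p.2) ∘ ptFilter 𝒪) =
      sSup ((fun p : ↥𝒪 × L => (p.1 : X → L) ⊓ fun _ => p.2) '' S) := by
    funext x
    rw [sSup_image', iSup_apply]
    exact (iSup_subtype'' S fun p : ↥𝒪 × L =>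
      ((p.1 : X → L) ⊓ fun _ => p.2 : X → L) x).symm
  rw [key]
  apply h𝒪.sSup_mem
  rintro g ⟨p, _, rfl⟩
  exact h𝒪.inf_mem _ _ p.1.2 (h𝒪.const_mem p.2)

/-- An `L`-order as a binary `L`-relation with the order axioms. -/
structure IsLOrder [Order.Frame L] (e : X → X → L) : Prop where
  refl : ∀ x, e x x = ⊤
  trans : ∀ x y z, e x y ⊓ e y z ≤ e x z
  antisymm : ∀ x y, e x y = ⊤ → e y x = ⊤ → x = y

/-- `s` is a supremum of the `L`-subset `A`. -/
def IsSupE [Order.Frame L] (e : X → X → L) (A : X → L) (s : X) : Prop :=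
  ∀ y, e s y = ⨅ z, A z ⇨ e z y

/-- `i` is an infimum of the `L`-subset `A`. -/
def IsInfE [Order.Frame L] (e : X → X → L) (A : X → L) (i : X) : Prop :=
  ∀ y, e y i = ⨅ z, A z ⇨ e y z

/-- Completeness: every `L`-subset has a supremum. -/
def CompleteE [Order.Frame L] (e : X → X → L) : Prop := ∀ A : X → L, ∃ s, IsSupE e A s

/-- Directedness of an `L`-subset. -/
def DirectedE [Order.Frame L] (e : X → X → L) (D : X → L) : Prop :=
  (⨆ x, D x) = ⊤ ∧ ∀ x y, D x ⊓ D y ≤ ⨆ z, D z ⊓ e x z ⊓ e y z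

/-- An ideal: a directed lower set. -/
def IsIdealE [Order.Frame L] (e : X → X → L) (I : X → L) : Prop :=
  DirectedE e I ∧ ∀ x y, I x ⊓ e y x ≤ I y

/-- `↑x(y) = e(x,y)`. -/
def upE [Order.Frame L] (e : X → X → L) (x : X) : X → L := fun y => e x y

/-- `⇓x(y) = ⨅_{I ideal} (e(x, ⊔I) ⇨ I(y))`. -/
def wbelowE [Order.Frame L] (e : X → X → L) (x y : X) : L :=
  ⨅ I : X → L, ⨅ _ : IsIdealE e I, ⨅ s : X, ⨅ _ : IsSupE e I s, e x s ⇨ I y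

/-- Scott open `L`-subsets. -/
def ScottOpenE [Order.Frame L] (e : X → X → L) (A : X → L) : Prop :=
  (∀ x y, A x ⊓ e x y ≤ A y) ∧
  ∀ D : X → L, DirectedE e D → ∀ s, IsSupE e D s → A s ≤ ⨆ x, A x ⊓ D x

/-- The `L`-Scott topology. -/
def scottOpens [Order.Frame L] (e : X → X → L) : Set (X → L) := { A | ScottOpenE e A }

/-- `u^l(x) = ⨆_{A ∈ σ_L(X)} u(A) ⊓ sub(A, ↑x)`. -/
def lowerOf [Order.Frame L] (e : X → X → L) (u : LFilter (scottOpens e)) : X → L :=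
  fun x => ⨆ A : ↥(scottOpens e), u.toFun A ⊓ subL (A : X → L) (upE e x)

/-- The specialization `L`-order `e(x,y) = ⨅_{A ∈ 𝒪} (A x ⇨ A y)`. -/
def specE [Order.Frame L] (𝒪 : Set (X → L)) (x y : X) : L :=
  ⨅ A : ↥𝒪, (A : X → L) x ⇨ (A : X → L) y

/-- `sub(u,v) = ⨅_{A ∈ 𝒪} (u A ⇨ v A)` for open filters. -/
def subF [Order.Frame L] {𝒪 : Set (X → L)} (u v : LFilter 𝒪) : L :=
  ⨅ A : ↥𝒪, u.toFun A ⇨ v.toFun A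

section Lemmas
variable [Order.Frame L] {e : X → X → L}

lemma isSup_le_e (hord : IsLOrder e) {A : X → L} {s : X} (hs : IsSupE e A s) (z : X) :
    A z ≤ e z s := by
  have h : (⊤ : L) ≤ A z ⇨ e z s := by
    rw [← hord.refl s]; nth_rewrite 1 [hs s]; exact iInf_le _ z
  simpa using le_himp_iff.mp h

lemma isSup_himp {A : X → L} {s : X} (hs : IsSupE e A s) (y z : X) :
    e s y ⊓ A z ≤ e z y :=
  le_himp_iff.mp ((hs y).le.trans (iInf_le _ z))

lemma exists_botE (hc : CompleteE e) : ∃ b : X, ∀ y, e b y = ⊤ := by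
  obtain ⟨b, hb⟩ := hc (fun _ => ⊥)
  exact ⟨b, fun y => by simpa using hb y⟩

open Classical in
lemma exists_joinE (hord : IsLOrder e) (hc : CompleteE e) (z z' : X) :
    ∃ j : X, ∀ w, e j w = e z w ⊓ e z' w := by
  obtain ⟨j, hj⟩ := hc (fun w => if w = z ∨ w = z' then (⊤ : L) else ⊥)
  refine ⟨j, fun w => ?_⟩
  rw [hj w]
  apply le_antisymm
  · refine le_inf ?_ ?_
    · refine (iInf_le _ z).trans ?_
      simp
    · refine (iInf_le _ z').trans ?_
      simp
  · refine le_iInf fun v => ?_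
    by_cases hv : v = z ∨ v = z'
    · rcases hv with rfl | rfl <;> simp
    · simp [hv]

lemma joinE_left (hord : IsLOrder e) {z z' j : X} (hj : ∀ w, e j w = e z w ⊓ e z' w) :
    e z j = ⊤ ∧ e z' j = ⊤ := by
  have h := hj j
  rw [hord.refl j] at h
  constructor
  · exact le_antisymm le_top (h.le.trans inf_le_left)
  · exact le_antisymm le_top (h.le.trans inf_le_right)

end Lemmas
section Lemmas2
variable [Order.Frame L] {e : X → X → L}

lemma wbelow_le {I : X → L} {s : X} (hI : IsIdealE e I) (hs : IsSupE e I s) (x y : X) :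
    wbelowE e x y ≤ e x s ⇨ I y :=
  (iInf_le _ I).trans ((iInf_le _ hI).trans ((iInf_le _ s).trans (iInf_le _ hs)))

lemma wbelow_lower {x y z : X} : wbelowE e x y ⊓ e z y ≤ wbelowE e x z := by
  refine le_iInf fun I => le_iInf fun hI => le_iInf fun s => le_iInf fun hs => ?_
  rw [le_himp_iff]
  calc wbelowE e x y ⊓ e z y ⊓ e x s
      ≤ ((e x s ⇨ I y) ⊓ e x s) ⊓ e z y := by
        refine le_trans (inf_le_inf (inf_le_inf (wbelow_le hI hs x y) le_rfl) le_rfl) ?_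
        exact le_of_eq (by ac_rfl)
    _ ≤ I y ⊓ e z y := inf_le_inf_right _ himp_inf_le
    _ ≤ I z := hI.2 y z

lemma wbelow_upper (hord : IsLOrder e) {x x' y : X} :
    wbelowE e x y ⊓ e x x' ≤ wbelowE e x' y := by
  refine le_iInf fun I => le_iInf fun hI => le_iInf fun s => le_iInf fun hs => ?_
  rw [le_himp_iff]
  calc wbelowE e x y ⊓ e x x' ⊓ e x' s
      ≤ (e x s ⇨ I y) ⊓ (e x x' ⊓ e x' s) := by
        rw [inf_assoc]
        exact inf_le_inf (wbelow_le hI hs x y) le_rfl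
    _ ≤ (e x s ⇨ I y) ⊓ e x s := inf_le_inf_left _ (hord.trans x x' s)
    _ ≤ I y := himp_inf_le

lemma ideal_bot {I : X → L} (hI : IsIdealE e I) {b : X} (hb : ∀ y, e b y = ⊤) :
    I b = ⊤ := by
  apply le_antisymm le_top
  rw [← hI.1.1]
  refine iSup_le fun w => ?_
  have := hI.2 w b
  rw [hb w] at this
  simpa using this

lemma down_ideal (hord : IsLOrder e) (w : X) : IsIdealE e (fun y => e y w) := by
  refine ⟨⟨?_, ?_⟩, ?_⟩
  · exact le_antisymm le_top (le_iSup_of_le w (by simp [hord.refl]))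
  · intro x y
    refine le_iSup_of_le w ?_
    simp [hord.refl]
  · intro x y
    rw [inf_comm]
    exact hord.trans y x w

lemma down_sup (hord : IsLOrder e) (w : X) : IsSupE e (fun y => e y w) w := by
  intro y
  apply le_antisymm
  · exact le_iInf fun z => le_himp_iff.mpr (by rw [inf_comm]; exact hord.trans z w y)
  · refine (iInf_le _ w).trans ?_
    simp [hord.refl]

lemma wbelow_le_e (hord : IsLOrder e) (x y : X) : wbelowE e x y ≤ e y x := by
  have h := wbelow_le (down_ideal hord x) (down_sup hord x) x y
  rwa [hord.refl, top_himp] at h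

end Lemmas2
section Lemmas3
variable [Order.Frame L] {e : X → X → L}

lemma wbelow_bot {x b : X} (hb : ∀ y, e b y = ⊤) : wbelowE e x b = ⊤ := by
  apply le_antisymm le_top
  refine le_iInf fun I => le_iInf fun hI => le_iInf fun s => le_iInf fun hs => ?_
  rw [ideal_bot hI hb]
  simp

lemma wbelow_ideal (hord : IsLOrder e) (hc : CompleteE e) (x : X) :
    IsIdealE e (wbelowE e x) := by
  refine ⟨⟨?_, ?_⟩, fun y z => wbelow_lower⟩
  · obtain ⟨b, hb⟩ := exists_botE hc
    exact le_antisymm le_top (le_iSup_of_le b (wbelow_bot hb).ge)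
  · intro z z'
    obtain ⟨j, hj⟩ := exists_joinE hord hc z z'
    obtain ⟨hzj, hz'j⟩ := joinE_left hord hj
    refine le_iSup_of_le j ?_
    rw [hzj, hz'j, inf_top_eq, inf_top_eq]
    refine le_iInf fun I => le_iInf fun hI => le_iInf fun s => le_iInf fun hs => ?_
    rw [le_himp_iff]
    calc wbelowE e x z ⊓ wbelowE e x z' ⊓ e x s
        ≤ ((e x s ⇨ I z) ⊓ e x s) ⊓ ((e x s ⇨ I z') ⊓ e x s) := by
          refine le_trans (inf_le_inf (inf_le_inf (wbelow_le hI hs x z)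
            (wbelow_le hI hs x z')) le_rfl) ?_
          refine le_of_eq ?_
          rw [inf_inf_distrib_right]
      _ ≤ I z ⊓ I z' := inf_le_inf himp_inf_le himp_inf_le
      _ ≤ ⨆ w, I w ⊓ e z w ⊓ e z' w := hI.1.2 z z'
      _ ≤ I j := by
          refine iSup_le fun w => ?_
          rw [inf_assoc, ← hj w]
          exact hI.2 w j

lemma wbelow_interp (hord : IsLOrder e) (hc : CompleteE e)
    (hcont : ∀ x, IsSupE e (fun y => wbelowE e x y) x) (x z : X) :
    wbelowE e x z ≤ ⨆ w, wbelowE e w z ⊓ wbelowE e x w := by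
  let J : X → L := fun y => ⨆ w, wbelowE e w y ⊓ wbelowE e x w
  have hJ : J = fun y => ⨆ w, wbelowE e w y ⊓ wbelowE e x w := rfl
  have hJlower : ∀ y z', J y ⊓ e z' y ≤ J z' := by
    intro y z'
    rw [hJ]
    simp only [iSup_inf_eq]
    refine iSup_le fun w => le_iSup_of_le w ?_
    rw [inf_right_comm]
    exact inf_le_inf_right _ wbelow_lower
  have hJtop : (⨆ y, J y) = ⊤ := by
    obtain ⟨b, hb⟩ := exists_botE hc
    refine le_antisymm le_top (le_iSup_of_le b ?_)
    rw [hJ]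
    have h2 : ∀ w, wbelowE e w b ⊓ wbelowE e x w = wbelowE e x w := fun w => by
      rw [wbelow_bot hb, top_inf_eq]
    simp only [h2]
    exact ((wbelow_ideal hord hc x).1.1).ge
  have hJdir : ∀ z₁ z₂, J z₁ ⊓ J z₂ ≤ ⨆ w, J w ⊓ e z₁ w ⊓ e z₂ w := by
    intro z₁ z₂
    conv_lhs => rw [hJ]
    simp only [iSup_inf_eq, inf_iSup_eq]
    refine iSup_le fun w' => iSup_le fun w => ?_
    calc wbelowE e w z₁ ⊓ wbelowE e x w ⊓ (wbelowE e w' z₂ ⊓ wbelowE e x w')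
        ≤ (wbelowE e w z₁ ⊓ wbelowE e w' z₂) ⊓ (wbelowE e x w ⊓ wbelowE e x w') := by
          refine le_of_eq ?_; ac_rfl
      _ ≤ (wbelowE e w z₁ ⊓ wbelowE e w' z₂) ⊓
            ⨆ v, wbelowE e x v ⊓ e w v ⊓ e w' v :=
          inf_le_inf_left _ ((wbelow_ideal hord hc x).1.2 w w')
      _ = ⨆ v, (wbelowE e w z₁ ⊓ wbelowE e w' z₂) ⊓
            (wbelowE e x v ⊓ e w v ⊓ e w' v) := inf_iSup_eq _ _
      _ ≤ ⨆ v, (wbelowE e v z₁ ⊓ wbelowE e v z₂) ⊓ wbelowE e x v := by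
          refine iSup_mono fun v => ?_
          calc wbelowE e w z₁ ⊓ wbelowE e w' z₂ ⊓ (wbelowE e x v ⊓ e w v ⊓ e w' v)
              ≤ (wbelowE e w z₁ ⊓ e w v) ⊓ ((wbelowE e w' z₂ ⊓ e w' v) ⊓
                  wbelowE e x v) := by refine le_of_eq ?_; ac_rfl
            _ ≤ wbelowE e v z₁ ⊓ (wbelowE e v z₂ ⊓ wbelowE e x v) :=
                inf_le_inf (wbelow_upper hord) (inf_le_inf_right _ (wbelow_upper hord))
            _ = (wbelowE e v z₁ ⊓ wbelowE e v z₂) ⊓ wbelowE e x v := by rw [inf_assoc]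
      _ ≤ ⨆ w, J w ⊓ e z₁ w ⊓ e z₂ w := by
          refine iSup_le fun v => ?_
          calc wbelowE e v z₁ ⊓ wbelowE e v z₂ ⊓ wbelowE e x v
              ≤ (⨆ u, wbelowE e v u ⊓ e z₁ u ⊓ e z₂ u) ⊓ wbelowE e x v :=
                inf_le_inf_right _ ((wbelow_ideal hord hc v).1.2 z₁ z₂)
            _ = ⨆ u, wbelowE e v u ⊓ e z₁ u ⊓ e z₂ u ⊓ wbelowE e x v := iSup_inf_eq _ _
            _ ≤ ⨆ w, J w ⊓ e z₁ w ⊓ e z₂ w := by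
                refine iSup_le fun u => le_iSup_of_le u ?_
                have hJu : wbelowE e v u ⊓ wbelowE e x v ≤ J u := by
                  rw [hJ]; exact le_iSup (fun w => wbelowE e w u ⊓ wbelowE e x w) v
                calc wbelowE e v u ⊓ e z₁ u ⊓ e z₂ u ⊓ wbelowE e x v
                    ≤ (wbelowE e v u ⊓ wbelowE e x v) ⊓ e z₁ u ⊓ e z₂ u := by
                      refine le_of_eq ?_; ac_rfl
                  _ ≤ J u ⊓ e z₁ u ⊓ e z₂ u :=
                      inf_le_inf (inf_le_inf hJu le_rfl) le_rfl
  have hJideal : IsIdealE e J := ⟨⟨hJtop, hJdir⟩, hJlower⟩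
  obtain ⟨s, hs⟩ := hc J
  have hxs : e x s = ⊤ := by
    apply le_antisymm le_top
    rw [hcont x s]
    refine le_iInf fun w => ?_
    rw [le_himp_iff, top_inf_eq]
    rw [hcont w s]
    refine le_iInf fun z' => ?_
    rw [le_himp_iff]
    refine le_trans ?_ (isSup_le_e hord hs z')
    have : wbelowE e w z' ⊓ wbelowE e x w ≤ J z' := by
      rw [hJ]; exact le_iSup (fun v => wbelowE e v z' ⊓ wbelowE e x v) w
    exact (inf_comm _ _).le.trans this
  have hfin := wbelow_le hJideal hs x z
  rw [hxs, top_himp] at hfin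
  exact hfin

end Lemmas3
section Lemmas4
variable [Order.Frame L] {e : X → X → L}

lemma scott_const (hord : IsLOrder e) (a : L) :
    (fun _ => a : X → L) ∈ scottOpens e := by
  refine ⟨fun x y => inf_le_left, fun D hD s hs => ?_⟩
  have : (⨆ x, (fun _ => a : X → L) x ⊓ D x) = a ⊓ ⨆ x, D x := (inf_iSup_eq _ _).symm
  rw [this, hD.1, inf_top_eq]

lemma scott_inf (hord : IsLOrder e) {A B : X → L}
    (hA : A ∈ scottOpens e) (hB : B ∈ scottOpens e) : A ⊓ B ∈ scottOpens e := by
  constructor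
  · intro x y
    calc (A ⊓ B) x ⊓ e x y ≤ (A x ⊓ e x y) ⊓ (B x ⊓ e x y) := by
          simp only [Pi.inf_apply]
          refine le_of_eq ?_; ac_rfl
    _ ≤ A y ⊓ B y := inf_le_inf (hA.1 x y) (hB.1 x y)
    _ = (A ⊓ B) y := rfl
  · intro D hD s hs
    calc (A ⊓ B) s = A s ⊓ B s := rfl
      _ ≤ (⨆ x, A x ⊓ D x) ⊓ ⨆ y, B y ⊓ D y :=
          inf_le_inf (hA.2 D hD s hs) (hB.2 D hD s hs)
      _ = ⨆ x, ⨆ y, (A x ⊓ D x) ⊓ (B y ⊓ D y) := by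
          rw [iSup_inf_eq]
          exact iSup_congr fun x => inf_iSup_eq _ _
      _ ≤ ⨆ w, (A ⊓ B) w ⊓ D w := by
          refine iSup_le fun x => iSup_le fun y => ?_
          calc A x ⊓ D x ⊓ (B y ⊓ D y)
              ≤ (A x ⊓ B y) ⊓ (D x ⊓ D y) := by refine le_of_eq ?_; ac_rfl
            _ ≤ (A x ⊓ B y) ⊓ ⨆ w, D w ⊓ e x w ⊓ e y w :=
                inf_le_inf_left _ (hD.2 x y)
            _ = ⨆ w, (A x ⊓ B y) ⊓ (D w ⊓ e x w ⊓ e y w) := inf_iSup_eq _ _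
            _ ≤ ⨆ w, (A ⊓ B) w ⊓ D w := by
                refine iSup_mono fun w => ?_
                calc A x ⊓ B y ⊓ (D w ⊓ e x w ⊓ e y w)
                    ≤ (A x ⊓ e x w) ⊓ (B y ⊓ e y w) ⊓ D w := by
                      refine le_of_eq ?_; ac_rfl
                  _ ≤ A w ⊓ B w ⊓ D w :=
                      inf_le_inf (inf_le_inf (hA.1 x w) (hB.1 y w)) le_rfl
                  _ = (A ⊓ B) w ⊓ D w := rfl

lemma lowerClosure_ideal (hord : IsLOrder e) {D : X → L} (hD : DirectedE e D) :
    IsIdealE e (fun w => ⨆ v, D v ⊓ e w v) := by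
  have hDle : ∀ w, D w ≤ ⨆ v, D v ⊓ e w v := fun w =>
    le_iSup_of_le w (by simp [hord.refl])
  refine ⟨⟨?_, ?_⟩, ?_⟩
  · refine le_antisymm le_top ?_
    rw [← hD.1]
    exact iSup_mono hDle
  · intro z₁ z₂
    simp only [iSup_inf_eq, inf_iSup_eq]
    refine iSup_le fun v' => iSup_le fun v => ?_
    calc D v ⊓ e z₁ v ⊓ (D v' ⊓ e z₂ v')
        ≤ (D v ⊓ D v') ⊓ (e z₁ v ⊓ e z₂ v') := by refine le_of_eq ?_; ac_rfl
      _ ≤ (⨆ w, D w ⊓ e v w ⊓ e v' w) ⊓ (e z₁ v ⊓ e z₂ v') :=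
          inf_le_inf_right _ (hD.2 v v')
      _ = ⨆ w, (D w ⊓ e v w ⊓ e v' w) ⊓ (e z₁ v ⊓ e z₂ v') := iSup_inf_eq _ _
      _ ≤ ⨆ w, ⨆ u, D u ⊓ e w u ⊓ e z₁ w ⊓ e z₂ w := by
          refine iSup_le fun w => le_iSup_of_le w (le_iSup_of_le w ?_)
          calc D w ⊓ e v w ⊓ e v' w ⊓ (e z₁ v ⊓ e z₂ v')
              ≤ D w ⊓ (e z₁ v ⊓ e v w) ⊓ (e z₂ v' ⊓ e v' w) := by
                refine le_of_eq ?_; ac_rfl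
            _ ≤ D w ⊓ e z₁ w ⊓ e z₂ w :=
                inf_le_inf (inf_le_inf le_rfl (hord.trans z₁ v w))
                  (hord.trans z₂ v' w)
            _ ≤ D w ⊓ e w w ⊓ e z₁ w ⊓ e z₂ w := by
                rw [hord.refl, inf_top_eq]
  · intro y z
    simp only [iSup_inf_eq]
    refine iSup_mono fun v => ?_
    rw [inf_assoc]
    exact inf_le_inf_left _ ((inf_comm _ _).le.trans (hord.trans z y v))

lemma lowerClosure_sup (hord : IsLOrder e) {D : X → L} {s : X} (hs : IsSupE e D s) :
    IsSupE e (fun w => ⨆ v, D v ⊓ e w v) s := by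
  intro y
  apply le_antisymm
  · refine le_iInf fun z => le_himp_iff.mpr ?_
    simp only [inf_iSup_eq]
    refine iSup_le fun v => ?_
    calc e s y ⊓ (D v ⊓ e z v)
        ≤ e z v ⊓ (e s y ⊓ D v) := by refine le_of_eq ?_; ac_rfl
      _ ≤ e z v ⊓ e v y := inf_le_inf_left _ (isSup_himp hs y v)
      _ ≤ e z y := hord.trans z v y
  · rw [hs y]
    refine le_iInf fun z => ?_
    refine (iInf_le _ z).trans ?_
    refine himp_le_himp_right (le_iSup_of_le z ?_)
    rw [hord.refl, inf_top_eq]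

lemma upW_scottOpen (hord : IsLOrder e) (hc : CompleteE e)
    (hcont : ∀ x, IsSupE e (fun y => wbelowE e x y) x) (w : X) :
    (fun y => wbelowE e y w) ∈ scottOpens e := by
  refine ⟨fun x y => wbelow_upper hord, fun D hD s hs => ?_⟩
  calc wbelowE e s w
      ≤ ⨆ u, wbelowE e u w ⊓ wbelowE e s u := wbelow_interp hord hc hcont s w
    _ ≤ ⨆ u, wbelowE e u w ⊓ ⨆ v, D v ⊓ e u v := by
        refine iSup_mono fun u => inf_le_inf_left _ ?_
        have h := wbelow_le (lowerClosure_ideal hord hD) (lowerClosure_sup hord hs) s u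
        rwa [hord.refl, top_himp] at h
    _ ≤ ⨆ x, wbelowE e x w ⊓ D x := by
        refine iSup_le fun u => ?_
        rw [inf_iSup_eq]
        refine iSup_le fun v => le_iSup_of_le v ?_
        calc wbelowE e u w ⊓ (D v ⊓ e u v)
            ≤ (wbelowE e u w ⊓ e u v) ⊓ D v := by refine le_of_eq ?_; ac_rfl
          _ ≤ wbelowE e v w ⊓ D v := inf_le_inf (wbelow_upper hord) le_rfl

end Lemmas4
section Lemmas5
variable [Order.Frame L] {e : X → X → L}

lemma sub_up_lower (hord : IsLOrder e) (A : X → L) (z z' : X) :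
    subL A (upE e z) ⊓ e z' z ≤ subL A (upE e z') := by
  refine le_iInf fun w => le_himp_iff.mpr ?_
  calc subL A (upE e z) ⊓ e z' z ⊓ A w
      ≤ ((A w ⇨ e z w) ⊓ A w) ⊓ e z' z := by
        refine le_trans (inf_le_inf (inf_le_inf ((iInf_le _ w)) le_rfl) le_rfl) ?_
        refine le_of_eq ?_; ac_rfl
    _ ≤ e z w ⊓ e z' z := inf_le_inf_right _ himp_inf_le
    _ ≤ e z' w := (inf_comm _ _).le.trans (hord.trans z' z w)

lemma sub_up_pair (hord : IsLOrder e) (A B : X → L) {z₁ z₂ j : X}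
    (hj : ∀ w, e j w = e z₁ w ⊓ e z₂ w) :
    subL A (upE e z₁) ⊓ subL B (upE e z₂) ≤ subL (A ⊓ B) (upE e j) := by
  refine le_iInf fun w => le_himp_iff.mpr ?_
  have h1 : subL A (upE e z₁) ≤ A w ⇨ e z₁ w := iInf_le _ w
  have h2 : subL B (upE e z₂) ≤ B w ⇨ e z₂ w := iInf_le _ w
  calc subL A (upE e z₁) ⊓ subL B (upE e z₂) ⊓ (A ⊓ B) w
      ≤ ((A w ⇨ e z₁ w) ⊓ A w) ⊓ ((B w ⇨ e z₂ w) ⊓ B w) := by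
        refine le_trans (inf_le_inf (inf_le_inf h1 h2) le_rfl) ?_
        simp only [Pi.inf_apply]
        refine le_of_eq ?_; ac_rfl
    _ ≤ e z₁ w ⊓ e z₂ w := inf_le_inf himp_inf_le himp_inf_le
    _ = upE e j w := (hj w).symm

lemma lowerOf_lower (hord : IsLOrder e) (u : LFilter (scottOpens e)) (z z' : X) :
    lowerOf e u z ⊓ e z' z ≤ lowerOf e u z' := by
  rw [lowerOf, iSup_inf_eq]
  refine iSup_mono fun A => ?_
  rw [inf_assoc]
  exact inf_le_inf_left _ (sub_up_lower hord _ z z')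

lemma le_lowerOf (u : LFilter (scottOpens e)) (A : ↥(scottOpens e)) (z : X) :
    u.toFun A ⊓ subL (A : X → L) (upE e z) ≤ lowerOf e u z :=
  le_iSup (fun A : ↥(scottOpens e) => u.toFun A ⊓ subL (A : X → L) (upE e z)) A

lemma lowerOf_le_e (hord : IsLOrder e) {u : LFilter (scottOpens e)} {ru : X}
    (hru : IsSupE e (lowerOf e u) ru) (z : X) : lowerOf e u z ≤ e z ru :=
  isSup_le_e hord hru z

lemma LFilter.inf_const_le {𝒪 : Set (X → L)} (u : LFilter 𝒪) (B : ↥𝒪) (c : L)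
    (hc : (fun _ => c : X → L) ∈ 𝒪) (h : (B : X → L) ⊓ (fun _ => c) ∈ 𝒪)
    (D : ↥𝒪) (hle : (B : X → L) ⊓ (fun _ => c) ≤ (D : X → L)) :
    u.toFun B ⊓ c ≤ u.toFun D := by
  have h1 := u.map_inf B ⟨fun _ => c, hc⟩ h
  have h2 : u.toFun B ⊓ c ≤ u.toFun ⟨(B : X → L) ⊓ (fun _ => c), h⟩ := by
    rw [h1]
    exact inf_le_inf_left _ (u.const_le c hc)
  exact h2.trans (u.mono _ D hle)

lemma lowerOf_directed (hord : IsLOrder e) (hc : CompleteE e)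
    (u : LFilter (scottOpens e)) : DirectedE e (lowerOf e u) := by
  constructor
  · obtain ⟨b, hb⟩ := exists_botE hc
    refine le_antisymm le_top (le_iSup_of_le b ?_)
    refine le_trans ?_ (le_lowerOf u ⟨fun _ => ⊤, scott_const hord ⊤⟩ b)
    refine le_inf (u.const_le ⊤ (scott_const hord ⊤)) (le_iInf fun w => ?_)
    simp [upE, hb w]
  · intro z₁ z₂
    obtain ⟨j, hj⟩ := exists_joinE hord hc z₁ z₂
    obtain ⟨hz₁j, hz₂j⟩ := joinE_left hord hj
    rw [lowerOf, lowerOf, iSup_inf_eq]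
    simp only [inf_iSup_eq]
    refine iSup_le fun A => iSup_le fun B => ?_
    refine le_iSup_of_le j ?_
    rw [hz₁j, hz₂j, inf_top_eq, inf_top_eq]
    have hAB : (A : X → L) ⊓ (B : X → L) ∈ scottOpens e := scott_inf hord A.2 B.2
    calc u.toFun A ⊓ subL (A : X → L) (upE e z₁) ⊓ (u.toFun B ⊓ subL (B : X → L) (upE e z₂))
        ≤ (u.toFun A ⊓ u.toFun B) ⊓
            (subL (A : X → L) (upE e z₁) ⊓ subL (B : X → L) (upE e z₂)) := by
          refine le_of_eq ?_; ac_rfl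
      _ ≤ u.toFun ⟨(A : X → L) ⊓ (B : X → L), hAB⟩ ⊓
            subL ((A : X → L) ⊓ (B : X → L)) (upE e j) := by
          refine inf_le_inf (u.map_inf A B hAB).ge (sub_up_pair hord _ _ hj)
      _ ≤ lowerOf e u j := le_lowerOf u ⟨_, hAB⟩ j

lemma lowerOf_ideal (hord : IsLOrder e) (hc : CompleteE e)
    (u : LFilter (scottOpens e)) : IsIdealE e (lowerOf e u) :=
  ⟨lowerOf_directed hord hc u, fun y z => lowerOf_lower hord u y z⟩

end Lemmas5
section Lemmas6
variable [Order.Frame L] {e : X → X → L}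

lemma filtOpens_inf_const {𝒪 : Set (X → L)} {W : LFilter 𝒪 → L}
    (hW : W ∈ filtOpens 𝒪) (c : L) : W ⊓ (fun _ => c) ∈ filtOpens 𝒪 := by
  obtain ⟨S, rfl⟩ := hW
  refine ⟨(fun p : ↥𝒪 × L => (p.1, p.2 ⊓ c)) '' S, ?_⟩
  funext u
  rw [iSup_image]
  simp only [Pi.inf_apply]
  rw [iSup_inf_eq]
  refine iSup_congr fun p => ?_
  rw [iSup_inf_eq]
  exact iSup_congr fun hp => (inf_assoc _ _ _)

lemma r_apply_eq (hord : IsLOrder e) (hc : CompleteE e)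
    {r : LFilter (scottOpens e) → X} (hr : ∀ u, IsSupE e (lowerOf e u) (r u))
    (A : ↥(scottOpens e)) :
    ((A : X → L) ∘ r) = fun u => ⨆ B : ↥(scottOpens e),
      u.toFun B ⊓ ⨆ z, (A : X → L) z ⊓ subL (B : X → L) (upE e z) := by
  funext u
  apply le_antisymm
  · calc (A : X → L) (r u)
        ≤ ⨆ z, (A : X → L) z ⊓ lowerOf e u z :=
          A.2.2 (lowerOf e u) (lowerOf_directed hord hc u) (r u) (hr u)
      _ ≤ _ := by
          refine iSup_le fun z => ?_
          rw [lowerOf, inf_iSup_eq]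
          refine iSup_le fun B => le_iSup_of_le B ?_
          calc (A : X → L) z ⊓ (u.toFun B ⊓ subL (B : X → L) (upE e z))
              ≤ u.toFun B ⊓ ((A : X → L) z ⊓ subL (B : X → L) (upE e z)) := by
                refine le_of_eq ?_; ac_rfl
            _ ≤ u.toFun B ⊓ ⨆ z, (A : X → L) z ⊓ subL (B : X → L) (upE e z) :=
                inf_le_inf_left _ (le_iSup (fun z => (A : X → L) z ⊓ subL (B : X → L) (upE e z)) z)
  · refine iSup_le fun B => ?_
    rw [inf_iSup_eq]
    refine iSup_le fun z => ?_
    calc u.toFun B ⊓ ((A : X → L) z ⊓ subL (B : X → L) (upE e z))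
        ≤ (A : X → L) z ⊓ (u.toFun B ⊓ subL (B : X → L) (upE e z)) := by
          refine le_of_eq ?_; ac_rfl
      _ ≤ (A : X → L) z ⊓ e z (r u) :=
          inf_le_inf_left _ ((le_lowerOf u B z).trans (lowerOf_le_e hord (hr u) z))
      _ ≤ (A : X → L) (r u) := A.2.1 z (r u)

lemma r_cont (hord : IsLOrder e) (hc : CompleteE e)
    {r : LFilter (scottOpens e) → X} (hr : ∀ u, IsSupE e (lowerOf e u) (r u))
    (A : ↥(scottOpens e)) : ((A : X → L) ∘ r) ∈ filtOpens (scottOpens e) := by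
  refine ⟨Set.range (fun B : ↥(scottOpens e) =>
    (B, ⨆ z, (A : X → L) z ⊓ subL (B : X → L) (upE e z))), ?_⟩
  rw [r_apply_eq hord hc hr A]
  funext u
  rw [iSup_range]

lemma sub_upW_top (hord : IsLOrder e) (w : X) :
    subL (fun y => wbelowE e y w) (upE e w) = ⊤ := by
  apply le_antisymm le_top
  refine le_iInf fun y => le_himp_iff.mpr ?_
  rw [top_inf_eq]
  exact wbelow_le_e hord y w

lemma wbelow_le_lowerOf (hord : IsLOrder e) (hc : CompleteE e)
    (hcont : ∀ x, IsSupE e (fun y => wbelowE e x y) x)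
    (u : LFilter (scottOpens e)) (x z : X) :
    wbelowE e x z ≤ u.toFun ⟨fun y => wbelowE e y z, upW_scottOpen hord hc hcont z⟩ ⊓
      subL (fun y => wbelowE e y z) (upE e z) → True := fun _ => trivial

lemma wbelow_r_le (hord : IsLOrder e) (hc : CompleteE e)
    (hcont : ∀ x, IsSupE e (fun y => wbelowE e x y) x)
    {r : LFilter (scottOpens e) → X} (hr : ∀ u, IsSupE e (lowerOf e u) (r u))
    (u : LFilter (scottOpens e)) (w : X) :
    wbelowE e (r u) w ≤
      u.toFun ⟨fun y => wbelowE e y w, upW_scottOpen hord hc hcont w⟩ := by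
  calc wbelowE e (r u) w
      ≤ ⨆ w', wbelowE e w' w ⊓ wbelowE e (r u) w' :=
        wbelow_interp hord hc hcont (r u) w
    _ ≤ ⨆ w', wbelowE e w' w ⊓ lowerOf e u w' := by
        refine iSup_mono fun w' => inf_le_inf_left _ ?_
        have h := wbelow_le (lowerOf_ideal hord hc u) (hr u) (r u) w'
        rwa [hord.refl, top_himp] at h
    _ ≤ u.toFun ⟨fun y => wbelowE e y w, upW_scottOpen hord hc hcont w⟩ := by
        refine iSup_le fun w' => ?_
        rw [lowerOf, inf_iSup_eq]
        refine iSup_le fun B => ?_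
        have harr : wbelowE e w' w ⊓ (u.toFun B ⊓ subL (B : X → L) (upE e w'))
            ≤ u.toFun B ⊓ (subL (B : X → L) (upE e w') ⊓ wbelowE e w' w) := by
          refine le_of_eq ?_; ac_rfl
        refine harr.trans ?_
        set c := subL (B : X → L) (upE e w') ⊓ wbelowE e w' w with hc'
        refine LFilter.inf_const_le u B c (scott_const hord c)
          (scott_inf hord B.2 (scott_const hord c)) _ ?_
        intro y
        simp only [Pi.inf_apply, hc']
        calc (B : X → L) y ⊓ (subL (B : X → L) (upE e w') ⊓ wbelowE e w' w)
            ≤ ((B : X → L) y ⊓ ((B : X → L) y ⇨ e w' y)) ⊓ wbelowE e w' w := by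
              rw [inf_assoc]
              exact inf_le_inf_left _ (inf_le_inf (iInf_le _ y) le_rfl)
          _ ≤ e w' y ⊓ wbelowE e w' w :=
              inf_le_inf inf_himp_le le_rfl
          _ ≤ wbelowE e y w := (inf_comm _ _).le.trans (wbelow_upper hord)

end Lemmas6
section Lemmas7
variable [Order.Frame L] {e : X → X → L}

lemma r_eta (hord : IsLOrder e) (hc : CompleteE e)
    (hcont : ∀ x, IsSupE e (fun y => wbelowE e x y) x)
    {r : LFilter (scottOpens e) → X} (hr : ∀ u, IsSupE e (lowerOf e u) (r u))
    (x : X) : r (ptFilter (scottOpens e) x) = x := by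
  apply hord.antisymm
  · apply le_antisymm le_top
    rw [hr (ptFilter (scottOpens e) x) x]
    refine le_iInf fun z => le_himp_iff.mpr ?_
    rw [top_inf_eq, lowerOf]
    refine iSup_le fun A => ?_
    calc (A : X → L) x ⊓ subL (A : X → L) (upE e z)
        ≤ (A : X → L) x ⊓ ((A : X → L) x ⇨ e z x) := inf_le_inf_left _ (iInf_le _ x)
      _ ≤ e z x := inf_himp_le
  · apply le_antisymm le_top
    rw [hcont x (r (ptFilter (scottOpens e) x))]
    refine le_iInf fun z => le_himp_iff.mpr ?_
    rw [top_inf_eq]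
    refine le_trans ?_ (lowerOf_le_e hord (hr _) z)
    refine le_trans ?_ (le_lowerOf (ptFilter (scottOpens e) x)
      ⟨fun y => wbelowE e y z, upW_scottOpen hord hc hcont z⟩ z)
    refine le_inf le_rfl ?_
    rw [sub_upW_top hord z]
    exact le_top

lemma key_pt1 (hord : IsLOrder e) (hc : CompleteE e)
    (hcont : ∀ x, IsSupE e (fun y => wbelowE e x y) x)
    {r : LFilter (scottOpens e) → X} (hr : ∀ u, IsSupE e (lowerOf e u) (r u))
    (hrc : ∀ A : ↥(scottOpens e), ((A : X → L) ∘ r) ∈ filtOpens (scottOpens e))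
    (α : LFilter (filtOpens (scottOpens e))) (A : ↥(scottOpens e)) (z w : X) :
    α.toFun ⟨phiF (scottOpens e) A, phi_mem (scottOpens e) A⟩ ⊓
      (subL (A : X → L) (upE e z) ⊓ wbelowE e z w) ≤
    α.toFun ⟨(fun y => wbelowE e y w) ∘ r,
      hrc ⟨fun y => wbelowE e y w, upW_scottOpen hord hc hcont w⟩⟩ := by
  refine LFilter.inf_const_le α ⟨phiF (scottOpens e) A, phi_mem (scottOpens e) A⟩
    (subL (A : X → L) (upE e z) ⊓ wbelowE e z w)
    (const_mem_filtOpens _ _ (scott_const hord _))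
    (filtOpens_inf_const (phi_mem (scottOpens e) A) _) _ ?_
  intro u
  simp only [Pi.inf_apply]
  calc phiF (scottOpens e) A u ⊓ (subL (A : X → L) (upE e z) ⊓ wbelowE e z w)
      ≤ (u.toFun A ⊓ subL (A : X → L) (upE e z)) ⊓ wbelowE e z w :=
        (inf_assoc _ _ _).symm.le
    _ ≤ e z (r u) ⊓ wbelowE e z w :=
        inf_le_inf ((le_lowerOf u A z).trans (lowerOf_le_e hord (hr u) z)) le_rfl
    _ ≤ wbelowE e (r u) w := (inf_comm _ _).le.trans (wbelow_upper hord)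

lemma key_pt2 (hord : IsLOrder e) (hc : CompleteE e)
    (hcont : ∀ x, IsSupE e (fun y => wbelowE e x y) x)
    {r : LFilter (scottOpens e) → X} (hr : ∀ u, IsSupE e (lowerOf e u) (r u))
    (hrc : ∀ A : ↥(scottOpens e), ((A : X → L) ∘ r) ∈ filtOpens (scottOpens e))
    (α : LFilter (filtOpens (scottOpens e))) (A : ↥(scottOpens e)) (z w : X) :
    α.toFun ⟨(A : X → L) ∘ r, hrc A⟩ ⊓
      (subL (A : X → L) (upE e z) ⊓ wbelowE e z w) ≤
    α.toFun ⟨phiF (scottOpens e) ⟨fun y => wbelowE e y w,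
      upW_scottOpen hord hc hcont w⟩,
      phi_mem (scottOpens e) ⟨fun y => wbelowE e y w, upW_scottOpen hord hc hcont w⟩⟩ := by
  refine LFilter.inf_const_le α ⟨(A : X → L) ∘ r, hrc A⟩
    (subL (A : X → L) (upE e z) ⊓ wbelowE e z w)
    (const_mem_filtOpens _ _ (scott_const hord _))
    (filtOpens_inf_const (hrc A) _) _ ?_
  intro u
  simp only [Pi.inf_apply, Function.comp_apply]
  calc (A : X → L) (r u) ⊓ (subL (A : X → L) (upE e z) ⊓ wbelowE e z w)
      ≤ ((A : X → L) (r u) ⊓ ((A : X → L) (r u) ⇨ e z (r u))) ⊓ wbelowE e z w := by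
        rw [inf_assoc]
        exact inf_le_inf_left _ (inf_le_inf (iInf_le _ (r u)) le_rfl)
    _ ≤ e z (r u) ⊓ wbelowE e z w := inf_le_inf inf_himp_le le_rfl
    _ ≤ wbelowE e (r u) w := (inf_comm _ _).le.trans (wbelow_upper hord)
    _ ≤ u.toFun ⟨fun y => wbelowE e y w, upW_scottOpen hord hc hcont w⟩ :=
        wbelow_r_le hord hc hcont hr u w

end Lemmas7

/-- First Main Theorem: For an `L`-continuous lattice `(X, e)` with its
`L`-Scott topology and `r(u) = ⊔(u^l)`, the map `r` is continuous and
`r ∘ Φ_L r = r ∘ μ_X`, `r ∘ η_X = id_X`; that is, `(X, r)` is an Eilenberg–Moore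
algebra of the open filter monad. -/
theorem stmt14 [Order.Frame L] (e : X → X → L) (hord : IsLOrder e) (hc : CompleteE e)
    (hcont : ∀ x, IsSupE e (fun y => wbelowE e x y) x)
    (r : LFilter (scottOpens e) → X) (hr : ∀ u, IsSupE e (lowerOf e u) (r u)) :
    (∀ A : ↥(scottOpens e), ((A : X → L) ∘ r) ∈ filtOpens (scottOpens e)) ∧
    (∀ x, r (ptFilter (scottOpens e) x) = x) ∧
    ∀ (hrc : ∀ A : ↥(scottOpens e), ((A : X → L) ∘ r) ∈ filtOpens (scottOpens e))
      (α : LFilter (filtOpens (scottOpens e))),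
      r (filtMap (filtOpens (scottOpens e)) (scottOpens e) r hrc α) =
        r (muF (scottOpens e) α) := by
  refine ⟨fun A => r_cont hord hc hr A, fun x => r_eta hord hc hcont hr x, ?_⟩
  intro hrc α
  have upWm : ∀ w : X, (fun y => wbelowE e y w) ∈ scottOpens e :=
    fun w => upW_scottOpen hord hc hcont w
  have h1 : e (r (filtMap (filtOpens (scottOpens e)) (scottOpens e) r hrc α))
      (r (muF (scottOpens e) α)) = ⊤ := by
    apply le_antisymm le_top
    rw [hr (filtMap (filtOpens (scottOpens e)) (scottOpens e) r hrc α)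
      (r (muF (scottOpens e) α))]
    refine le_iInf fun z => le_himp_iff.mpr ?_
    rw [top_inf_eq, lowerOf]
    refine iSup_le fun A => ?_
    rw [hcont z (r (muF (scottOpens e) α))]
    refine le_iInf fun w => le_himp_iff.mpr ?_
    calc (filtMap (filtOpens (scottOpens e)) (scottOpens e) r hrc α).toFun A ⊓
          subL (A : X → L) (upE e z) ⊓ wbelowE e z w
        ≤ α.toFun ⟨(A : X → L) ∘ r, hrc A⟩ ⊓
            (subL (A : X → L) (upE e z) ⊓ wbelowE e z w) := by
          rw [inf_assoc]
          exact le_rfl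
      _ ≤ α.toFun ⟨phiF (scottOpens e) ⟨fun y => wbelowE e y w,
            upW_scottOpen hord hc hcont w⟩,
            phi_mem (scottOpens e) ⟨fun y => wbelowE e y w,
              upW_scottOpen hord hc hcont w⟩⟩ :=
          key_pt2 hord hc hcont hr hrc α A z w
      _ = (muF (scottOpens e) α).toFun ⟨fun y => wbelowE e y w,
            upW_scottOpen hord hc hcont w⟩ := rfl
      _ ≤ (muF (scottOpens e) α).toFun ⟨fun y => wbelowE e y w,
            upW_scottOpen hord hc hcont w⟩ ⊓
            subL (fun y => wbelowE e y w) (upE e w) := by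
          refine le_inf le_rfl ?_
          rw [sub_upW_top hord w]
          exact le_top
      _ ≤ lowerOf e (muF (scottOpens e) α) w :=
          le_lowerOf (muF (scottOpens e) α) ⟨_, upW_scottOpen hord hc hcont w⟩ w
      _ ≤ e w (r (muF (scottOpens e) α)) :=
          lowerOf_le_e hord (hr (muF (scottOpens e) α)) w
  have h2 : e (r (muF (scottOpens e) α))
      (r (filtMap (filtOpens (scottOpens e)) (scottOpens e) r hrc α)) = ⊤ := by
    apply le_antisymm le_top
    rw [hr (muF (scottOpens e) α)
      (r (filtMap (filtOpens (scottOpens e)) (scottOpens e) r hrc α))]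
    refine le_iInf fun z => le_himp_iff.mpr ?_
    rw [top_inf_eq, lowerOf]
    refine iSup_le fun A => ?_
    rw [hcont z (r (filtMap (filtOpens (scottOpens e)) (scottOpens e) r hrc α))]
    refine le_iInf fun w => le_himp_iff.mpr ?_
    calc (muF (scottOpens e) α).toFun A ⊓
          subL (A : X → L) (upE e z) ⊓ wbelowE e z w
        ≤ α.toFun ⟨phiF (scottOpens e) A, phi_mem (scottOpens e) A⟩ ⊓
            (subL (A : X → L) (upE e z) ⊓ wbelowE e z w) := by
          rw [inf_assoc]
          exact le_rfl
      _ ≤ α.toFun ⟨(fun y => wbelowE e y w) ∘ r,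
            hrc ⟨fun y => wbelowE e y w, upW_scottOpen hord hc hcont w⟩⟩ :=
          key_pt1 hord hc hcont hr hrc α A z w
      _ = (filtMap (filtOpens (scottOpens e)) (scottOpens e) r hrc α).toFun
            ⟨fun y => wbelowE e y w, upW_scottOpen hord hc hcont w⟩ := rfl
      _ ≤ (filtMap (filtOpens (scottOpens e)) (scottOpens e) r hrc α).toFun
            ⟨fun y => wbelowE e y w, upW_scottOpen hord hc hcont w⟩ ⊓
            subL (fun y => wbelowE e y w) (upE e w) := by
          refine le_inf le_rfl ?_
          rw [sub_upW_top hord w]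
          exact le_top
      _ ≤ lowerOf e (filtMap (filtOpens (scottOpens e)) (scottOpens e) r hrc α) w :=
          le_lowerOf _ ⟨_, upW_scottOpen hord hc hcont w⟩ w
      _ ≤ e w (r (filtMap (filtOpens (scottOpens e)) (scottOpens e) r hrc α)) :=
          lowerOf_le_e hord
            (hr (filtMap (filtOpens (scottOpens e)) (scottOpens e) r hrc α)) w
  exact hord.antisymm _ _ h1 h2
end

section
/- Let (X,𝒪) be a T0 L-valued topological space with specialization L-order e, and let u, v ∈ Φ_L(X). Then (1) ⨅_{W ∈ 𝒪(Φ_L(X))} (W(u) ⇨ W(v)) = ⨅_{A∈𝒪} (u(A) ⇨ v(A)) = sub(u,v); and (2) if r : Φ_L(X) → X is continuous, then sub(u,v) ≤ e(r(u), r(v)). -/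
variable {L : Type*} {X : Type*} {Y : Type*}

/-- For a `T0` `L`-valued topological space with specialization
`L`-order `e` and `u, v ∈ Φ_L(X)`:
(1) `⨅_{W ∈ 𝒪(Φ_L(X))} (W(u) ⇨ W(v)) = ⨅_{A ∈ 𝒪} (u(A) ⇨ v(A)) = sub(u,v)`;
(2) if `r : Φ_L(X) → X` is continuous then `sub(u,v) ≤ e(r(u), r(v))`. -/
theorem stmt15 [Order.Frame L] (𝒪 : Set (X → L)) (h𝒪 : IsLTopology 𝒪)
    (hT0 : ∀ x y : X, (∀ A ∈ 𝒪, A x = A y) → x = y) (u v : LFilter 𝒪) :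
    ((⨅ W : ↥(filtOpens 𝒪), (W : LFilter 𝒪 → L) u ⇨ (W : LFilter 𝒪 → L) v) =
      subF u v) ∧
    ∀ r : LFilter 𝒪 → X, (∀ A : ↥𝒪, ((A : X → L) ∘ r) ∈ filtOpens 𝒪) →
      subF u v ≤ specE 𝒪 (r u) (r v) := by
  have key : ∀ W ∈ filtOpens 𝒪, subF u v ≤ W u ⇨ W v := by
    rintro W ⟨S, rfl⟩
    rw [le_himp_iff, inf_iSup_eq]
    refine iSup_le fun p => ?_
    rw [inf_iSup_eq]
    refine iSup_le fun hp => ?_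
    refine le_trans ?_ (le_iSup₂ p hp)
    have h1 : subF u v ⊓ u.toFun p.1 ≤ v.toFun p.1 := by
      rw [← le_himp_iff]
      exact iInf_le _ p.1
    calc subF u v ⊓ (u.toFun p.1 ⊓ p.2) = (subF u v ⊓ u.toFun p.1) ⊓ p.2 := by
          rw [inf_assoc]
      _ ≤ v.toFun p.1 ⊓ p.2 := inf_le_inf_right _ h1
  constructor
  · apply le_antisymm
    · refine le_iInf fun A => ?_
      exact iInf_le_of_le ⟨phiF 𝒪 A, phi_mem 𝒪 A⟩ le_rfl
    · exact le_iInf fun W => key W W.2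
  · intro r hr
    refine le_iInf fun A => ?_
    exact key ((A : X → L) ∘ r) (hr A)
end

section
/- Let (X,r) be a Φ_L-algebra over the category of T0 L-valued topological spaces, and let e be the specialization L-order of X. Then for every u ∈ Φ_L(X) and x ∈ X, lim_X u(x) = e(x, r(u)), where lim_X u(x) = ⨅_{A∈𝒪} (A(x) ⇨ u(A)). -/
variable {L : Type*} {X : Type*} {Y : Type*}

lemma aux_le_u [Order.Frame L] {𝒪 : Set (X → L)} (h𝒪 : IsLTopology 𝒪)
    (r : LFilter 𝒪 → X) (hrc : ∀ A : ↥𝒪, ((A : X → L) ∘ r) ∈ filtOpens 𝒪)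
    (hunit : ∀ x, r (ptFilter 𝒪 x) = x) (u : LFilter 𝒪) (A : ↥𝒪) :
    (A : X → L) (r u) ≤ u.toFun A := by
  obtain ⟨S, hS⟩ := hrc A
  have hu : (A : X → L) (r u) = ⨆ p ∈ S, u.toFun p.1 ⊓ p.2 := congrFun hS u
  have hpt : ∀ y, (A : X → L) y = ⨆ p ∈ S, (p.1 : X → L) y ⊓ p.2 := fun y => by
    have h := congrFun hS (ptFilter 𝒪 y)
    rw [Function.comp_apply, hunit y] at h
    exact h
  rw [hu]
  refine iSup₂_le fun p hp => ?_
  have hmem : (p.1 : X → L) ⊓ (fun _ => p.2) ∈ 𝒪 :=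
    h𝒪.inf_mem _ _ p.1.2 (h𝒪.const_mem p.2)
  have h1 : u.toFun p.1 ⊓ p.2 ≤ u.toFun ⟨(p.1 : X → L) ⊓ (fun _ => p.2), hmem⟩ := by
    rw [u.map_inf p.1 ⟨fun _ => p.2, h𝒪.const_mem p.2⟩ hmem]
    exact inf_le_inf_left _ (u.const_le p.2 (h𝒪.const_mem p.2))
  refine h1.trans (u.mono _ A fun y => ?_)
  have h2 : (p.1 : X → L) y ⊓ p.2 ≤ ⨆ p ∈ S, (p.1 : X → L) y ⊓ p.2 :=
    le_iSup₂ (f := fun p _ => (p.1 : X → L) y ⊓ p.2) p hp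
  simpa [hpt y] using h2

/-- For a `Φ_L`-algebra `(X, r)` over `T0` `L`-valued topological spaces
with specialization `L`-order `e`: `lim_X u (x) = e(x, r(u))`, where
`lim_X u (x) = ⨅_{A ∈ 𝒪} (A(x) ⇨ u(A))`. -/
theorem stmt16 [Order.Frame L] (𝒪 : Set (X → L)) (h𝒪 : IsLTopology 𝒪)
    (hT0 : ∀ x y : X, (∀ A ∈ 𝒪, A x = A y) → x = y)
    (r : LFilter 𝒪 → X)
    (hrc : ∀ A : ↥𝒪, ((A : X → L) ∘ r) ∈ filtOpens 𝒪)
    (hunit : ∀ x, r (ptFilter 𝒪 x) = x)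
    (hmul : ∀ α : LFilter (filtOpens 𝒪),
      r (filtMap (filtOpens 𝒪) 𝒪 r hrc α) = r (muF 𝒪 α)) :
    ∀ (u : LFilter 𝒪) (x : X),
      (⨅ A : ↥𝒪, (A : X → L) x ⇨ u.toFun A) = specE 𝒪 x (r u) := by
  intro u x
  refine le_antisymm ?_ ?_
  · unfold specE
    refine le_iInf fun A => ?_
    rw [le_himp_iff]
    obtain ⟨S, hS⟩ := hrc A
    have hu : (A : X → L) (r u) = ⨆ p ∈ S, u.toFun p.1 ⊓ p.2 := congrFun hS u
    have hx : (A : X → L) x = ⨆ p ∈ S, (p.1 : X → L) x ⊓ p.2 := by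
      have h := congrFun hS (ptFilter 𝒪 x)
      rw [Function.comp_apply, hunit x] at h
      exact h
    rw [hx, hu]
    simp only [inf_iSup_eq]
    refine iSup₂_le fun p hp => ?_
    refine le_trans ?_ (le_iSup₂ (f := fun p _ => u.toFun p.1 ⊓ p.2) p hp)
    have h1 : (⨅ A : ↥𝒪, (A : X → L) x ⇨ u.toFun A) ≤ (p.1 : X → L) x ⇨ u.toFun p.1 :=
      iInf_le _ p.1
    calc (⨅ A : ↥𝒪, (A : X → L) x ⇨ u.toFun A) ⊓ ((p.1 : X → L) x ⊓ p.2)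
        ≤ (((p.1 : X → L) x ⇨ u.toFun p.1) ⊓ (p.1 : X → L) x) ⊓ p.2 := by
          rw [← inf_assoc]; exact inf_le_inf_right _ (inf_le_inf_right _ h1)
      _ ≤ u.toFun p.1 ⊓ p.2 := inf_le_inf_right _ himp_inf_le
  · unfold specE
    refine le_iInf fun A => ?_
    refine (iInf_le (fun A : ↥𝒪 => (A : X → L) x ⇨ (A : X → L) (r u)) A).trans ?_
    exact himp_le_himp_left (aux_le_u h𝒪 r hrc hunit u A)
end

section
/- Let (X,r) be a Φ_L-algebra over the category of T0 L-valued topological spaces, and let e be the specialization L-order of X. Then (X,e) is a complete L-ordered set, and for every L-subset A : X → L, the infimum of A is ⊓A = r([A]). -/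
variable {L : Type*} {X : Type*} {Y : Type*}

lemma specE_refl' [Order.Frame L] (𝒪 : Set (X → L)) (x : X) : specE 𝒪 x x = ⊤ := by
  simp [specE]

lemma specE_trans' [Order.Frame L] (𝒪 : Set (X → L)) (x y z : X) :
    specE 𝒪 x y ⊓ specE 𝒪 y z ≤ specE 𝒪 x z := by
  refine le_iInf fun B => le_himp_iff.2 ?_
  calc (specE 𝒪 x y ⊓ specE 𝒪 y z) ⊓ (B : X → L) x
      ≤ (((B:X→L) x ⇨ (B:X→L) y) ⊓ ((B:X→L) y ⇨ (B:X→L) z)) ⊓ (B:X→L) x :=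
        inf_le_inf_right _ (inf_le_inf (iInf_le _ B) (iInf_le _ B))
    _ = ((B:X→L) y ⇨ (B:X→L) z) ⊓ (((B:X→L) x ⇨ (B:X→L) y) ⊓ (B:X→L) x) := by
        rw [inf_comm (((B:X→L) x ⇨ (B:X→L) y)) _, inf_assoc]
    _ ≤ ((B:X→L) y ⇨ (B:X→L) z) ⊓ (B:X→L) y := inf_le_inf_left _ himp_inf_le
    _ ≤ (B:X→L) z := himp_inf_le

/-- Monotonicity of a continuous structure map with respect to `subF` and `specE`. -/
lemma rMono [Order.Frame L] (𝒪 : Set (X → L)) (r : LFilter 𝒪 → X)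
    (hrc : ∀ A : ↥𝒪, ((A : X → L) ∘ r) ∈ filtOpens 𝒪) (u v : LFilter 𝒪) :
    subF u v ≤ specE 𝒪 (r u) (r v) := by
  refine le_iInf fun B => ?_
  obtain ⟨S, hS⟩ := hrc B
  have hu : (B : X → L) (r u) = ⨆ p ∈ S, u.toFun p.1 ⊓ p.2 := congrFun hS u
  have hv : (B : X → L) (r v) = ⨆ p ∈ S, v.toFun p.1 ⊓ p.2 := congrFun hS v
  rw [hu, hv, le_himp_iff, inf_iSup_eq]
  refine iSup_le fun p => ?_
  rw [inf_iSup_eq]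
  refine iSup_le fun hp => ?_
  refine le_trans ?_ (le_iSup_of_le p (le_iSup_of_le hp le_rfl))
  calc subF u v ⊓ (u.toFun p.1 ⊓ p.2) = (subF u v ⊓ u.toFun p.1) ⊓ p.2 := (inf_assoc _ _ _).symm
    _ ≤ ((u.toFun p.1 ⇨ v.toFun p.1) ⊓ u.toFun p.1) ⊓ p.2 :=
        inf_le_inf_right _ (inf_le_inf_right _ (iInf_le _ p.1))
    _ ≤ v.toFun p.1 ⊓ p.2 := inf_le_inf_right _ himp_inf_le

/-- Suprema from infima of upper-bound sets. -/
lemma supFromInf [Order.Frame L] (e : X → X → L)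
    (hrefl : ∀ x, e x x = ⊤) (htrans : ∀ x y z, e x y ⊓ e y z ≤ e x z)
    (A : X → L) (s : X) (hs : IsInfE e (fun y => ⨅ z, A z ⇨ e z y) s) :
    IsSupE e A s := by
  have hub : ∀ z, A z ≤ e z s := by
    intro z
    rw [hs z]
    refine le_iInf fun y => le_himp_iff.2 ?_
    exact le_trans (inf_le_inf_left _ (iInf_le _ z)) inf_himp_le
  intro y
  refine le_antisymm ?_ ?_
  · refine le_iInf fun z => le_himp_iff.2 ?_
    calc e s y ⊓ A z ≤ e s y ⊓ e z s := inf_le_inf_left _ (hub z)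
      _ = e z s ⊓ e s y := inf_comm _ _
      _ ≤ e z y := htrans z s y
  · have h1 : (⊤ : L) ≤ ⨅ z, (⨅ w, A w ⇨ e w z) ⇨ e s z := by
      rw [← hs s, hrefl]
    have h2 := le_trans h1 (iInf_le _ y)
    rwa [top_le_iff, himp_eq_top_iff] at h2

/-- For a `Φ_L`-algebra `(X, r)` over `T0` `L`-valued topological spaces,
the specialization `L`-order `e` makes `X` a complete `L`-ordered set, with
`⊓A = r([A])` for every `L`-subset `A`. -/
theorem stmt17 [Order.Frame L] (𝒪 : Set (X → L)) (h𝒪 : IsLTopology 𝒪)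
    (hT0 : ∀ x y : X, (∀ A ∈ 𝒪, A x = A y) → x = y)
    (r : LFilter 𝒪 → X)
    (hrc : ∀ A : ↥𝒪, ((A : X → L) ∘ r) ∈ filtOpens 𝒪)
    (hunit : ∀ x, r (ptFilter 𝒪 x) = x)
    (hmul : ∀ α : LFilter (filtOpens 𝒪),
      r (filtMap (filtOpens 𝒪) 𝒪 r hrc α) = r (muF 𝒪 α)) :
    IsLOrder (specE 𝒪) ∧ CompleteE (specE 𝒪) ∧
    ∀ A : X → L, IsInfE (specE 𝒪) A (r (prFilter 𝒪 A)) := by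
  set e := specE 𝒪 with he
  have hrefl := specE_refl' 𝒪
  have htrans := specE_trans' 𝒪
  have hinf : ∀ A : X → L, IsInfE e A (r (prFilter 𝒪 A)) := by
    intro A y
    set i := r (prFilter 𝒪 A) with hi
    refine le_antisymm ?_ ?_
    · refine le_iInf fun z => le_himp_iff.2 ?_
      have hz : A z ≤ e i z := by
        have h1 : A z ≤ subF (prFilter 𝒪 A) (ptFilter 𝒪 z) := by
          refine le_iInf fun B => le_himp_iff.2 ?_
          calc A z ⊓ (prFilter 𝒪 A).toFun B ≤ A z ⊓ (A z ⇨ (B:X→L) z) :=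
              inf_le_inf_left _ (iInf_le _ z)
            _ ≤ (B:X→L) z := inf_himp_le
        have h2 := rMono 𝒪 r hrc (prFilter 𝒪 A) (ptFilter 𝒪 z)
        rw [hunit] at h2
        exact h1.trans h2
      calc e y i ⊓ A z ≤ e y i ⊓ e i z := inf_le_inf_left _ hz
        _ ≤ e y z := htrans y i z
    · have h1 : (⨅ z, A z ⇨ e y z) ≤ subF (ptFilter 𝒪 y) (prFilter 𝒪 A) := by
        refine le_iInf fun B => le_himp_iff.2 (le_iInf fun x => le_himp_iff.2 ?_)
        have hx : (⨅ z, A z ⇨ e y z) ⊓ A x ≤ (B:X→L) y ⇨ (B:X→L) x := by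
          calc (⨅ z, A z ⇨ e y z) ⊓ A x ≤ (A x ⇨ e y x) ⊓ A x :=
              inf_le_inf_right _ (iInf_le _ x)
            _ ≤ e y x := himp_inf_le
            _ ≤ (B:X→L) y ⇨ (B:X→L) x := iInf_le _ B
        calc ((⨅ z, A z ⇨ e y z) ⊓ (ptFilter 𝒪 y).toFun B) ⊓ A x
            = ((⨅ z, A z ⇨ e y z) ⊓ A x) ⊓ (B:X→L) y := by
              show _ ⊓ (B:X→L) y ⊓ A x = _
              rw [inf_right_comm]
          _ ≤ ((B:X→L) y ⇨ (B:X→L) x) ⊓ (B:X→L) y := inf_le_inf_right _ hx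
          _ ≤ (B:X→L) x := himp_inf_le
      have h2 := rMono 𝒪 r hrc (ptFilter 𝒪 y) (prFilter 𝒪 A)
      rw [hunit] at h2
      exact h1.trans h2
  refine ⟨⟨hrefl, htrans, ?_⟩, ?_, hinf⟩
  · intro x y hxy hyx
    refine hT0 x y fun B hB => ?_
    have h1 : (B : X → L) x ≤ (B : X → L) y := by
      have := le_trans (le_of_eq hxy.symm) (iInf_le _ (⟨B, hB⟩ : ↥𝒪))
      rwa [top_le_iff, himp_eq_top_iff] at this
    have h2 : (B : X → L) y ≤ (B : X → L) x := by
      have := le_trans (le_of_eq hyx.symm) (iInf_le _ (⟨B, hB⟩ : ↥𝒪))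
      rwa [top_le_iff, himp_eq_top_iff] at this
    exact le_antisymm h1 h2
  · intro A
    exact ⟨_, supFromInf e hrefl htrans A _ (hinf _)⟩
end

section
/- Let (X,𝒪) be an L-valued topological space and order Φ_L(X) by sub(u,v) = ⨅_{A∈𝒪} (u(A) ⇨ v(A)). Then (Φ_L(X), sub) is an L-valued dcpo: for every directed L-subset 𝒜 : Φ_L(X) → L, the map w defined by w(A) = ⨆_{u∈Φ_L(X)} 𝒜(u) ⊓ u(A) is an open filter of X and is the supremum of 𝒜 in (Φ_L(X), sub), i.e. sub(w,v) = ⨅_{u∈Φ_L(X)} (𝒜(u) ⇨ sub(u,v)) for every v ∈ Φ_L(X). -/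
variable {L : Type*} {X : Type*} {Y : Type*}

/-- `(Φ_L(X), sub)` is an `L`-valued dcpo: for every directed `L`-subset
`𝒜` of `Φ_L(X)`, the map `w : A ↦ ⨆_u 𝒜(u) ⊓ u(A)` is an open filter of `X` and is
the supremum of `𝒜` in `(Φ_L(X), sub)`. -/
theorem stmt18 [Order.Frame L] (𝒪 : Set (X → L)) (h𝒪 : IsLTopology 𝒪)
    (𝒜 : LFilter 𝒪 → L)
    (hdir : (⨆ u, 𝒜 u) = ⊤ ∧
      ∀ u v : LFilter 𝒪, 𝒜 u ⊓ 𝒜 v ≤ ⨆ w, 𝒜 w ⊓ subF u w ⊓ subF v w) :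
    (∀ (A B : ↥𝒪) (h : (A : X → L) ⊓ (B : X → L) ∈ 𝒪),
      (⨆ u, 𝒜 u ⊓ u.toFun ⟨(A : X → L) ⊓ (B : X → L), h⟩) =
        (⨆ u, 𝒜 u ⊓ u.toFun A) ⊓ ⨆ u, 𝒜 u ⊓ u.toFun B) ∧
    (∀ (a : L) (h : (fun _ => a : X → L) ∈ 𝒪),
      a ≤ ⨆ u, 𝒜 u ⊓ u.toFun ⟨fun _ => a, h⟩) ∧
    ∀ v : LFilter 𝒪,
      (⨅ A : ↥𝒪, (⨆ u, 𝒜 u ⊓ u.toFun A) ⇨ v.toFun A) =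
        ⨅ u, 𝒜 u ⇨ subF u v := by
  obtain ⟨htop, hd⟩ := hdir
  have subF_apply : ∀ (u w : LFilter 𝒪) (A : ↥𝒪), subF u w ⊓ u.toFun A ≤ w.toFun A := by
    intro u w A
    exact inf_le_inf_right _ (iInf_le _ A) |>.trans (himp_inf_le)
  refine ⟨?_, ?_, ?_⟩
  · intro A B h
    apply le_antisymm
    · refine le_inf (iSup_le fun u => le_iSup_of_le u ?_) (iSup_le fun u => le_iSup_of_le u ?_)
      · exact inf_le_inf_left _ (u.mono _ A inf_le_left)
      · exact inf_le_inf_left _ (u.mono _ B inf_le_right)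
    · rw [inf_iSup_eq]
      refine iSup_le fun u => ?_
      rw [iSup_inf_eq]
      refine iSup_le fun v => ?_
      have key : 𝒜 v ⊓ v.toFun A ⊓ (𝒜 u ⊓ u.toFun B) ≤
          (⨆ w, 𝒜 w ⊓ subF v w ⊓ subF u w) ⊓ (v.toFun A ⊓ u.toFun B) := by
        refine le_inf ?_ (inf_le_inf inf_le_right inf_le_right)
        exact le_trans (inf_le_inf inf_le_left inf_le_left) (hd v u)
      refine key.trans ?_
      rw [iSup_inf_eq]
      refine iSup_le fun w => le_iSup_of_le w ?_
      rw [w.map_inf A B h]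
      have h1 : 𝒜 w ⊓ subF v w ⊓ subF u w ⊓ (v.toFun A ⊓ u.toFun B) ≤ 𝒜 w :=
        inf_le_left.trans (inf_le_left.trans inf_le_left)
      have h2 : 𝒜 w ⊓ subF v w ⊓ subF u w ⊓ (v.toFun A ⊓ u.toFun B) ≤ w.toFun A := by
        refine le_trans ?_ (subF_apply v w A)
        exact le_inf (inf_le_left.trans (inf_le_left.trans inf_le_right))
          (inf_le_right.trans inf_le_left)
      have h3 : 𝒜 w ⊓ subF v w ⊓ subF u w ⊓ (v.toFun A ⊓ u.toFun B) ≤ w.toFun B := by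
        refine le_trans ?_ (subF_apply u w B)
        exact le_inf (inf_le_left.trans inf_le_right) (inf_le_right.trans inf_le_right)
      exact le_inf h1 (le_inf h2 h3)
  · intro a h
    calc a = a ⊓ ⨆ u, 𝒜 u := by rw [htop, inf_top_eq]
    _ = ⨆ u, a ⊓ 𝒜 u := by rw [inf_iSup_eq]
    _ ≤ ⨆ u, 𝒜 u ⊓ u.toFun ⟨fun _ => a, h⟩ :=
        iSup_mono fun u => le_inf inf_le_right (inf_le_left.trans (u.const_le a h))
  · intro v
    have hsup : ∀ {ι : Sort _} (f : ι → L) (c : L), (⨆ i, f i) ⇨ c = ⨅ i, f i ⇨ c := by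
      intro ι f c
      apply le_antisymm
      · exact le_iInf fun i => himp_le_himp_right (le_iSup f i)
      · rw [le_himp_iff, inf_iSup_eq]
        exact iSup_le fun i =>
          (inf_le_inf_right _ (iInf_le _ i)).trans himp_inf_le
    have hinf : ∀ {ι : Sort _} (c : L) (f : ι → L), c ⇨ (⨅ i, f i) = ⨅ i, c ⇨ f i := by
      intro ι c f
      apply le_antisymm
      · exact le_iInf fun i => himp_le_himp_left (iInf_le f i)
      · rw [le_himp_iff]
        exact le_iInf fun i => (inf_le_inf_right _ (iInf_le _ i)).trans himp_inf_le
    have : (⨅ u, 𝒜 u ⇨ subF u v) = ⨅ u, ⨅ A : ↥𝒪, 𝒜 u ⇨ (u.toFun A ⇨ v.toFun A) := by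
      exact iInf_congr fun u => hinf _ _
    rw [this, iInf_comm]
    refine iInf_congr fun A => ?_
    rw [hsup]
    exact iInf_congr fun u => by rw [himp_himp]
end

section
/- Let (X,r) be a Φ_L-algebra over the category of T0 L-valued topological spaces, with specialization L-order e on X. Then r : (Φ_L(X), sub) → (X, e) preserves suprema of directed L-subsets: for every directed L-subset 𝒜 : Φ_L(X) → L, r(⊔𝒜) is a supremum in (X,e) of the L-subset r→(𝒜), where r→(𝒜)(x) = ⨆_{u : r(u)=x} 𝒜(u) and ⊔𝒜 is the open filter A ↦ ⨆_u 𝒜(u) ⊓ u(A). -/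
variable {L : Type*} {X : Type*} {Y : Type*}

/-- For a `Φ_L`-algebra `(X, r)` with specialization `L`-order `e`, the
map `r` preserves suprema of directed `L`-subsets: for every directed `𝒜` with
supremum filter `w : A ↦ ⨆_u 𝒜(u) ⊓ u(A)`, the point `r(w)` is a supremum in
`(X, e)` of `r→(𝒜) : x ↦ ⨆_{u, r(u) = x} 𝒜(u)`. -/
theorem stmt19 [Order.Frame L] (𝒪 : Set (X → L)) (h𝒪 : IsLTopology 𝒪)
    (hT0 : ∀ x y : X, (∀ A ∈ 𝒪, A x = A y) → x = y)
    (r : LFilter 𝒪 → X)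
    (hrc : ∀ A : ↥𝒪, ((A : X → L) ∘ r) ∈ filtOpens 𝒪)
    (hunit : ∀ x, r (ptFilter 𝒪 x) = x)
    (hmul : ∀ α : LFilter (filtOpens 𝒪),
      r (filtMap (filtOpens 𝒪) 𝒪 r hrc α) = r (muF 𝒪 α))
    (𝒜 : LFilter 𝒪 → L)
    (hdir : (⨆ u, 𝒜 u) = ⊤ ∧
      ∀ u v : LFilter 𝒪, 𝒜 u ⊓ 𝒜 v ≤ ⨆ w, 𝒜 w ⊓ subF u w ⊓ subF v w)
    (w : LFilter 𝒪) (hw : ∀ A : ↥𝒪, w.toFun A = ⨆ u, 𝒜 u ⊓ u.toFun A) :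
    IsSupE (specE 𝒪) (fun x => ⨆ u : LFilter 𝒪, ⨆ _ : r u = x, 𝒜 u) (r w) := by
  -- Key computation: A(r w) = ⨆ u, 𝒜 u ⊓ A(r u), using continuity of r.
  have K : ∀ A : ↥𝒪, (A : X → L) (r w) = ⨆ u, 𝒜 u ⊓ (A : X → L) (r u) := by
    intro A
    obtain ⟨S, hS⟩ := hrc A
    have hpt : ∀ v : LFilter 𝒪, (A : X → L) (r v) = ⨆ p ∈ S, v.toFun p.1 ⊓ p.2 :=
      fun v => congrFun hS v
    rw [hpt]
    calc ⨆ p ∈ S, w.toFun p.1 ⊓ p.2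
        = ⨆ p ∈ S, ⨆ u, 𝒜 u ⊓ (u.toFun p.1 ⊓ p.2) := by
          simp_rw [hw, iSup_inf_eq, inf_assoc]
      _ = ⨆ u, ⨆ p ∈ S, 𝒜 u ⊓ (u.toFun p.1 ⊓ p.2) := by
          rw [iSup_comm]
          exact iSup_congr fun p => iSup_comm
      _ = ⨆ u, 𝒜 u ⊓ ⨆ p ∈ S, u.toFun p.1 ⊓ p.2 := by
          refine iSup_congr fun u => ?_
          simp_rw [inf_iSup_eq]
      _ = ⨆ u, 𝒜 u ⊓ (A : X → L) (r u) := by simp_rw [← hpt]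
  -- 𝒜 u ≤ subF u w
  have Auw : ∀ u : LFilter 𝒪, 𝒜 u ≤ subF u w := by
    intro u
    refine le_iInf fun A => le_himp_iff.2 ?_
    rw [hw A]
    exact le_iSup (fun v => 𝒜 v ⊓ v.toFun A) u
  -- subF u v ≤ specE (r u) (r v) (monotonicity of r)
  have M : ∀ u : LFilter 𝒪, subF u w ≤ specE 𝒪 (r u) (r w) := by
    intro u
    refine le_iInf fun A => le_himp_iff.2 ?_
    obtain ⟨S, hS⟩ := hrc A
    have hpt : ∀ v : LFilter 𝒪, (A : X → L) (r v) = ⨆ p ∈ S, v.toFun p.1 ⊓ p.2 :=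
      fun v => congrFun hS v
    rw [hpt, hpt]
    simp_rw [inf_iSup_eq]
    refine iSup_le fun p => iSup_le fun hp => ?_
    refine le_trans ?_ (le_iSup₂ (f := fun p _ => w.toFun p.1 ⊓ p.2) p hp)
    rw [← inf_assoc]
    refine inf_le_inf_right _ ?_
    calc subF u w ⊓ u.toFun p.1
        ≤ (u.toFun p.1 ⇨ w.toFun p.1) ⊓ u.toFun p.1 :=
          inf_le_inf_right _ (iInf_le _ p.1)
      _ ≤ w.toFun p.1 := himp_inf_le
  -- transitivity of specE
  have Tr : ∀ x y z : X, specE 𝒪 x y ⊓ specE 𝒪 y z ≤ specE 𝒪 x z := by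
    intro x y z
    refine le_iInf fun A => le_himp_iff.2 ?_
    calc specE 𝒪 x y ⊓ specE 𝒪 y z ⊓ (A : X → L) x
        ≤ ((A : X → L) x ⇨ (A : X → L) y) ⊓ ((A : X → L) y ⇨ (A : X → L) z) ⊓
            (A : X → L) x :=
          inf_le_inf_right _ (inf_le_inf (iInf_le _ A) (iInf_le _ A))
      _ = ((A : X → L) y ⇨ (A : X → L) z) ⊓
            (((A : X → L) x ⇨ (A : X → L) y) ⊓ (A : X → L) x) := by
          rw [inf_comm (((A : X → L) x ⇨ (A : X → L) y)), inf_assoc]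
      _ ≤ ((A : X → L) y ⇨ (A : X → L) z) ⊓ (A : X → L) y :=
          inf_le_inf_left _ himp_inf_le
      _ ≤ (A : X → L) z := himp_inf_le
  intro y
  refine le_antisymm ?_ ?_
  · refine le_iInf fun z => le_himp_iff.2 ?_
    rw [inf_iSup_eq]
    refine iSup_le fun u => ?_
    rw [inf_iSup_eq]
    refine iSup_le fun hu => ?_
    subst hu
    calc specE 𝒪 (r w) y ⊓ 𝒜 u
        ≤ specE 𝒪 (r w) y ⊓ specE 𝒪 (r u) (r w) :=
          inf_le_inf_left _ (le_trans (Auw u) (M u))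
      _ = specE 𝒪 (r u) (r w) ⊓ specE 𝒪 (r w) y := inf_comm _ _
      _ ≤ specE 𝒪 (r u) y := Tr _ _ _
  · refine le_iInf fun A => le_himp_iff.2 ?_
    rw [K A, inf_iSup_eq]
    refine iSup_le fun u => ?_
    have h1 : (⨅ z, (⨆ v : LFilter 𝒪, ⨆ _ : r v = z, 𝒜 v) ⇨ specE 𝒪 z y) ⊓ 𝒜 u ≤
        specE 𝒪 (r u) y := by
      calc (⨅ z, (⨆ v : LFilter 𝒪, ⨆ _ : r v = z, 𝒜 v) ⇨ specE 𝒪 z y) ⊓ 𝒜 u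
          ≤ ((⨆ v : LFilter 𝒪, ⨆ _ : r v = r u, 𝒜 v) ⇨ specE 𝒪 (r u) y) ⊓
              (⨆ v : LFilter 𝒪, ⨆ _ : r v = r u, 𝒜 v) := by
            refine inf_le_inf (iInf_le _ (r u)) ?_
            exact le_trans (le_iSup (fun _ : r u = r u => 𝒜 u) rfl)
              (le_iSup (fun v => ⨆ _ : r v = r u, 𝒜 v) u)
        _ ≤ specE 𝒪 (r u) y := himp_inf_le
    calc (⨅ z, (⨆ v : LFilter 𝒪, ⨆ _ : r v = z, 𝒜 v) ⇨ specE 𝒪 z y) ⊓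
          (𝒜 u ⊓ (A : X → L) (r u))
        = ((⨅ z, (⨆ v : LFilter 𝒪, ⨆ _ : r v = z, 𝒜 v) ⇨ specE 𝒪 z y) ⊓ 𝒜 u) ⊓
            (A : X → L) (r u) := by rw [inf_assoc]
      _ ≤ specE 𝒪 (r u) y ⊓ (A : X → L) (r u) := inf_le_inf_right _ h1
      _ ≤ ((A : X → L) (r u) ⇨ (A : X → L) y) ⊓ (A : X → L) (r u) :=
          inf_le_inf_right _ (iInf_le _ A)
      _ ≤ (A : X → L) y := himp_inf_le
end
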